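/- For B > 1, the function s ↦ 1/(Λ_s(B) + Λ_{1-s}(B)) on (0,1), where Λ_s(B) = ((B+1)^s + (B-1)^s)/((B+1)^s - (B-1)^s), is strictly concave and attains its maximum at s = 1/2, where its value equals 1/(2Λ_{1/2}(B)). -/

import Mathlib

open Real Set

noncomputable def LambdaCB (s ν : ℝ) : ℝ :=
  ((ν + 1) ^ s + (ν - 1) ^ s) / ((ν + 1) ^ s - (ν - 1) ^ s)

lemma expAffine_strictConvex (k m : ℝ) (hk : k ≠ 0) :
    StrictConvexOn ℝ univ (fun s : ℝ => exp (k * s + m)) := by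
  refine ⟨convex_univ, fun x _ y _ hxy α β hα hβ hab => ?_⟩
  have hne : k * x + m ≠ k * y + m := by
    intro h
    exact hxy (mul_left_cancel₀ hk (by linarith))
  have key := strictConvexOn_exp.2 (mem_univ (k * x + m)) (mem_univ (k * y + m)) hne hα hβ hab
  simp only [smul_eq_mul] at key ⊢
  have h1 : k * (α * x + β * y) + m = α * (k * x + m) + β * (k * y + m) := by
    linear_combination (-m) * hab
  rw [h1]; exact key

theorem stmt8 (B : ℝ) (hB : 1 < B) :
    StrictConcaveOn ℝ (Ioo (0 : ℝ) 1)
      (fun s => 1 / (LambdaCB s B + LambdaCB (1 - s) B)) ∧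
    (∀ s ∈ Ioo (0 : ℝ) 1,
      1 / (LambdaCB s B + LambdaCB (1 - s) B)
        ≤ 1 / (LambdaCB (1 / 2) B + LambdaCB (1 - 1 / 2) B)) ∧
    1 / (LambdaCB (1 / 2) B + LambdaCB (1 - 1 / 2) B) = 1 / (2 * LambdaCB (1 / 2) B) := by
  have hb : (0:ℝ) < B - 1 := by linarith
  have ha : (0:ℝ) < B + 1 := by linarith
  have hba : B - 1 < B + 1 := by linarith
  have hd : (0:ℝ) < 2 * ((B + 1) - (B - 1)) := by linarith
  set g : ℝ → ℝ := fun s =>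
    ((B + 1) + (B - 1) - ((B + 1) ^ s * (B - 1) ^ (1 - s) + (B + 1) ^ (1 - s) * (B - 1) ^ s))
      / (2 * ((B + 1) - (B - 1))) with hg
  have hAA : ∀ s : ℝ, (B + 1) ^ s * (B + 1) ^ (1 - s) = B + 1 := by
    intro s; rw [← rpow_add ha]; norm_num
  have hCC : ∀ s : ℝ, (B - 1) ^ s * (B - 1) ^ (1 - s) = B - 1 := by
    intro s; rw [← rpow_add hb]; norm_num
  have key : ∀ s ∈ Ioo (0:ℝ) 1, 1 / (LambdaCB s B + LambdaCB (1 - s) B) = g s := by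
    intro s hs
    obtain ⟨hs0, hs1⟩ := hs
    have hs1' : (0:ℝ) < 1 - s := by linarith
    have h1 : (B - 1) ^ s < (B + 1) ^ s := rpow_lt_rpow hb.le hba hs0
    have h2 : (B - 1) ^ (1 - s) < (B + 1) ^ (1 - s) := rpow_lt_rpow hb.le hba hs1'
    have hne1 : (B + 1) ^ s - (B - 1) ^ s ≠ 0 := by linarith
    have hne2 : (B + 1) ^ (1 - s) - (B - 1) ^ (1 - s) ≠ 0 := by linarith
    simp only [LambdaCB, hg]
    rw [div_add_div _ _ hne1 hne2]
    have hnum : ((B + 1) ^ s + (B - 1) ^ s) * ((B + 1) ^ (1 - s) - (B - 1) ^ (1 - s))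
        + ((B + 1) ^ s - (B - 1) ^ s) * ((B + 1) ^ (1 - s) + (B - 1) ^ (1 - s))
        = 2 * ((B + 1) - (B - 1)) := by
      linear_combination 2 * hAA s - 2 * hCC s
    rw [hnum, one_div_div]
    congr 1
    linear_combination hAA s + hCC s
  have hk : log (B - 1) < log (B + 1) := log_lt_log hb hba
  have hrel : ∀ s : ℝ, (B + 1) ^ s * (B - 1) ^ (1 - s) + (B + 1) ^ (1 - s) * (B - 1) ^ s
      = exp ((log (B + 1) - log (B - 1)) * s + log (B - 1))
        + exp ((log (B - 1) - log (B + 1)) * s + log (B + 1)) := by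
    intro s
    rw [rpow_def_of_pos ha, rpow_def_of_pos hb, rpow_def_of_pos ha, rpow_def_of_pos hb,
      ← exp_add, ← exp_add]
    ring_nf
  have hconv : StrictConvexOn ℝ univ
      ((fun s : ℝ => exp ((log (B + 1) - log (B - 1)) * s + log (B - 1)))
        + (fun s : ℝ => exp ((log (B - 1) - log (B + 1)) * s + log (B + 1)))) :=
    (expAffine_strictConvex _ _ (by intro h; nlinarith)).add
      (expAffine_strictConvex _ _ (by intro h; nlinarith))
  have gconc : StrictConcaveOn ℝ univ g := by
    refine ⟨convex_univ, fun x _ y _ hxy α β hα hβ hab => ?_⟩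
    have hlt := hconv.2 (mem_univ x) (mem_univ y) hxy hα hβ hab
    simp only [Pi.add_apply, smul_eq_mul] at hlt ⊢
    simp only [hg]
    rw [← mul_div_assoc, ← mul_div_assoc, ← add_div, div_lt_div_iff₀ hd hd]
    have e1 := hrel x
    have e2 := hrel y
    have e3 := hrel (α * x + β * y)
    nlinarith [hd, hlt, hab]
  refine ⟨⟨convex_Ioo 0 1, fun x hx y hy hxy α β hα hβ hab => ?_⟩, ?_, ?_⟩
  · simp only [smul_eq_mul]
    rw [key x hx, key y hy, key _ (by simpa using (convex_Ioo (0:ℝ) 1) hx hy hα.le hβ.le hab)]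
    simpa [smul_eq_mul] using gconc.2 (mem_univ x) (mem_univ y) hxy hα hβ hab
  · intro s hs
    have h12 : (1/2 : ℝ) ∈ Ioo (0:ℝ) 1 := by norm_num
    rw [key s hs, key _ h12]
    simp only [hg]
    rw [div_le_div_iff₀ hd hd]
    have hx1 : (0:ℝ) < (B + 1) ^ s * (B - 1) ^ (1 - s) :=
      mul_pos (rpow_pos_of_pos ha s) (rpow_pos_of_pos hb _)
    have hx2 : (0:ℝ) < (B + 1) ^ (1 - s) * (B - 1) ^ s :=
      mul_pos (rpow_pos_of_pos ha _) (rpow_pos_of_pos hb _)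
    have hu : (0:ℝ) < (B + 1) ^ (1/2 : ℝ) * (B - 1) ^ (1/2 : ℝ) :=
      mul_pos (rpow_pos_of_pos ha _) (rpow_pos_of_pos hb _)
    have hprod : ((B + 1) ^ s * (B - 1) ^ (1 - s)) * ((B + 1) ^ (1 - s) * (B - 1) ^ s)
        = ((B + 1) ^ (1/2 : ℝ) * (B - 1) ^ (1/2 : ℝ)) ^ 2 := by
      have e4 : ((B + 1) ^ (1/2 : ℝ) * (B - 1) ^ (1/2 : ℝ)) ^ 2
          = ((B + 1) ^ (1/2:ℝ) * (B + 1) ^ (1 - 1/2 : ℝ)) *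
            ((B - 1) ^ (1/2:ℝ) * (B - 1) ^ (1 - 1/2 : ℝ)) := by
        norm_num; ring
      rw [e4, hAA, hCC]
      linear_combination ((B-1) ^ s * (B-1) ^ (1-s)) * hAA s + (B+1) * hCC s
    have s1 := Real.sq_sqrt hx1.le
    have s2 := Real.sq_sqrt hx2.le
    have s3 : Real.sqrt ((B + 1) ^ s * (B - 1) ^ (1 - s)) *
        Real.sqrt ((B + 1) ^ (1 - s) * (B - 1) ^ s)
        = (B + 1) ^ (1/2 : ℝ) * (B - 1) ^ (1/2 : ℝ) := by
      rw [← Real.sqrt_mul hx1.le, hprod, Real.sqrt_sq hu.le]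
    have amgm : (B + 1) ^ s * (B - 1) ^ (1 - s) + (B + 1) ^ (1 - s) * (B - 1) ^ s
        ≥ 2 * ((B + 1) ^ (1/2 : ℝ) * (B - 1) ^ (1/2 : ℝ)) := by
      nlinarith [sq_nonneg (Real.sqrt ((B + 1) ^ s * (B - 1) ^ (1 - s))
        - Real.sqrt ((B + 1) ^ (1 - s) * (B - 1) ^ s)), s1, s2, s3]
    have h12e : (1 : ℝ) - 1/2 = 1/2 := by norm_num
    rw [h12e]
    nlinarith [amgm, hd]
  · rw [show (1:ℝ) - 1/2 = 1/2 by norm_num, two_mul]
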